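/- Let A be a commutative ring and let F →ʰ M →ᵍ N → 0 be an exact sequence of A-modules, where F is a free A-module of rank s. Let r ≥ s be an integer. Then there is a unique A-linear map φ : (⋀^{r−s}_A N) ⊗_A (⋀^s_A F) → ⋀^r_A M such that φ((⋀^{r−s} g)(a) ⊗ b) = a ∧ (⋀^s h)(b) for every a ∈ ⋀^{r−s}_A M and every b ∈ ⋀^s_A F. -/

import Mathlib

open ExteriorAlgebra TensorProduct

noncomputable def expMap {R : Type*} [CommRing R] {M N : Type*} [AddCommGroup M] [Module R M]
    [AddCommGroup N] [Module R N] (n : ℕ) (f : M →ₗ[R] N) :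
    ⋀[R]^n M →ₗ[R] ⋀[R]^n N :=
  (ExteriorAlgebra.map f).toLinearMap.restrict (p := ⋀[R]^n M) (q := ⋀[R]^n N)
    (by
      intro x hx
      rw [← ExteriorAlgebra.ιMulti_span_fixedDegree] at hx
      induction hx using Submodule.span_induction with
      | mem y hy =>
          obtain ⟨v, rfl⟩ := hy
          show ExteriorAlgebra.map f (ExteriorAlgebra.ιMulti R n v) ∈ _
          rw [ExteriorAlgebra.map_apply_ιMulti]
          exact ExteriorAlgebra.ιMulti_range R n (Set.mem_range_self _)
      | zero => simp
      | add y z _ _ hy hz => simpa [map_add] using Submodule.add_mem _ hy hz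
      | smul a y _ hy => simpa [map_smul] using Submodule.smul_mem _ a hy)

namespace StarkAux

variable {A : Type*} [CommRing A] {F M N : Type*}
  [AddCommGroup F] [Module A F] [AddCommGroup M] [Module A M] [AddCommGroup N] [Module A N]

lemma ιMulti_append {p q : ℕ} (u : Fin p → M) (v : Fin q → M) :
    (ιMulti A (p + q) (Fin.append u v) : ExteriorAlgebra A M)
      = ιMulti A p u * ιMulti A q v := by
  rw [ιMulti_apply, ιMulti_apply, ιMulti_apply, ← List.prod_append, ← List.ofFn_fin_append]
  refine congrArg _ (congrArg List.ofFn (funext fun i => ?_))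
  refine Fin.addCases (fun i => ?_) (fun i => ?_) i <;>
    simp [Fin.append_left, Fin.append_right]

lemma mul_mem_exteriorPower {p q : ℕ} {x y : ExteriorAlgebra A M}
    (hx : x ∈ ⋀[A]^p M) (hy : y ∈ ⋀[A]^q M) : x * y ∈ ⋀[A]^(p+q) M := by
  have := Submodule.mul_mem_mul hx hy
  rwa [← pow_add] at this

lemma key_vanish {s : ℕ} (bF : Module.Basis (Fin s) A F) (h : F →ₗ[A] M) {p : ℕ}
    [inst : DecidableEq (Fin p)] (w : Fin p → M) (i : Fin p) (f : F) :
    (ιMulti A p (Function.update w i (h f)) : ExteriorAlgebra A M)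
      * ιMulti A s (fun j => h (bF j)) = 0 := by
  have hf : f = ∑ j, bF.repr f j • bF j := (bF.sum_repr f).symm
  rw [hf, map_sum, ← AlternatingMap.coe_multilinearMap (ιMulti A p),
    MultilinearMap.map_update_sum, Finset.sum_mul]
  refine Finset.sum_eq_zero fun j _ => ?_
  rw [map_smul, MultilinearMap.map_update_smul, smul_mul_assoc,
    AlternatingMap.coe_multilinearMap]
  rw [show (ιMulti A p (Function.update w i (h (bF j))) : ExteriorAlgebra A M)
      * ιMulti A s (fun j => h (bF j))
      = ιMulti A (p + s) (Fin.append (Function.update w i (h (bF j))) (fun j => h (bF j)))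
    from (ιMulti_append _ _).symm]
  rw [AlternatingMap.map_eq_zero_of_eq _ _
    (i := Fin.castAdd s i) (j := Fin.natAdd p j) ?_ ?_, smul_zero]
  · rw [Fin.append_left, Fin.append_right, Function.update_self]
  · intro e
    have := congrArg Fin.val e
    simp only [Fin.coe_castAdd, Fin.coe_natAdd] at this
    omega


lemma replace_mul {s : ℕ} (bF : Module.Basis (Fin s) A F) (h : F →ₗ[A] M) {p : ℕ}
    (w d : Fin p → M) (hd : ∀ i, d i ∈ LinearMap.range h) :
    (ιMulti A p (w + d) : ExteriorAlgebra A M) * ιMulti A s (fun j => h (bF j))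
      = ιMulti A p w * ιMulti A s (fun j => h (bF j)) := by
  classical
  rw [add_comm w d, ← AlternatingMap.coe_multilinearMap (ιMulti A p),
    MultilinearMap.map_add_univ, Finset.sum_mul]
  rw [Finset.sum_eq_single (∅ : Finset (Fin p))]
  · simp [Finset.piecewise_empty]
  · intro S _ hS
    obtain ⟨i, hi⟩ := Finset.nonempty_iff_ne_empty.2 hS
    obtain ⟨f0, hf0⟩ := hd i
    have hup : S.piecewise d w = Function.update (S.piecewise d w) i (h f0) := by
      rw [hf0, show d i = S.piecewise d w i from (Finset.piecewise_eq_of_mem _ _ _ hi).symm,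
        Function.update_eq_self]
    rw [AlternatingMap.coe_multilinearMap, hup]
    exact key_vanish bF h _ i f0
  · simp

variable {s : ℕ} (bF : Module.Basis (Fin s) A F) (h : F →ₗ[A] M) {g : M →ₗ[A] N}

/-- The alternating map `v ↦ (section of g applied to v, wedged) * (h e₁ ∧ ⋯ ∧ h eₛ)`. -/
noncomputable def auxAlt (hsurj : Function.Surjective g)
    (hker : ∀ m, g m = 0 → m ∈ LinearMap.range h) (p : ℕ) :
    N [⋀^Fin p]→ₗ[A] ExteriorAlgebra A M where
  toFun v := ιMulti A p (Function.surjInv hsurj ∘ v) * ιMulti A s (fun j => h (bF j))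
  map_update_add' := by
    classical
    intro inst v i x y
    cases Subsingleton.elim inst ‹_›
    set t := Function.surjInv hsurj with ht
    obtain ⟨f0, hf0⟩ := hker (t (x + y) - t x - t y)
      (by simp [ht, Function.surjInv_eq hsurj])
    have hxy : t (x + y) = (t x + t y) + h f0 := by rw [hf0]; abel
    simp only [Function.comp_update]
    rw [hxy, AlternatingMap.map_update_add, AlternatingMap.map_update_add, add_mul, add_mul,
      key_vanish (inst := inst) bF h _ i f0, add_zero]
  map_update_smul' := by
    classical
    intro inst v i c x
    cases Subsingleton.elim inst ‹_›
    set t := Function.surjInv hsurj with ht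
    obtain ⟨f0, hf0⟩ := hker (t (c • x) - c • t x)
      (by simp [ht, Function.surjInv_eq hsurj])
    have hcx : t (c • x) = c • t x + h f0 := by rw [hf0]; abel
    simp only [Function.comp_update]
    rw [hcx, AlternatingMap.map_update_add, AlternatingMap.map_update_smul, add_mul,
      key_vanish (inst := inst) bF h _ i f0, add_zero, smul_mul_assoc]
  map_eq_zero_of_eq' := by
    intro v i j hv hij
    rw [AlternatingMap.map_eq_zero_of_eq _ _
      (show (Function.surjInv hsurj ∘ v) i = (Function.surjInv hsurj ∘ v) j by
        simp [Function.comp_apply, hv]) hij, zero_mul]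

/-- The linear map `⋀^p N → ExteriorAlgebra A M` induced by `auxAlt`. -/
noncomputable def auxMap (hsurj : Function.Surjective g)
    (hker : ∀ m, g m = 0 → m ∈ LinearMap.range h) (p : ℕ) :
    ⋀[A]^p N →ₗ[A] ExteriorAlgebra A M :=
  (liftAlternating (Function.update (fun _ => 0) p (auxAlt bF h hsurj hker p))).comp
    (Submodule.subtype _)

lemma auxMap_expMap (hsurj : Function.Surjective g)
    (hker : ∀ m, g m = 0 → m ∈ LinearMap.range h) (p : ℕ) (a : ⋀[A]^p M) :
    auxMap bF h hsurj hker p (expMap p g a)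
      = (a : ExteriorAlgebra A M) * ιMulti A s (fun j => h (bF j)) := by
  classical
  have hEq : Set.EqOn
      ((liftAlternating (Function.update (fun _ => 0) p (auxAlt bF h hsurj hker p))) ∘ₗ
        (ExteriorAlgebra.map g).toLinearMap)
      (LinearMap.mulRight A (ιMulti A s (fun j => h (bF j))))
      ((⋀[A]^p M : Submodule A (ExteriorAlgebra A M)) : Set (ExteriorAlgebra A M)) := by
    rw [← ιMulti_span_fixedDegree]
    apply LinearMap.eqOn_span
    rintro _ ⟨v, rfl⟩
    simp only [LinearMap.comp_apply, AlgHom.toLinearMap_apply, map_apply_ιMulti,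
      LinearMap.mulRight_apply, liftAlternating_apply_ιMulti, Function.update_self]
    show (ιMulti A p (Function.surjInv hsurj ∘ (g ∘ v)) : ExteriorAlgebra A M)
        * ιMulti A s (fun j => h (bF j)) = ιMulti A p v * ιMulti A s (fun j => h (bF j))
    have hv : Function.surjInv hsurj ∘ (g ∘ v)
        = v + (Function.surjInv hsurj ∘ (g ∘ v) - v) := by abel
    rw [hv, replace_mul bF h]
    intro i
    refine hker _ ?_
    simp [Function.surjInv_eq hsurj]
  exact hEq a.2

lemma expMap_surjective (hsurj : Function.Surjective g) (p : ℕ) :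
    Function.Surjective (expMap (R := A) p g) := by
  rintro ⟨x, hx⟩
  have hx' : x ∈ Submodule.span A (Set.range (ιMulti A p (M := N))) := by
    rwa [ιMulti_span_fixedDegree]
  have key : ∀ y ∈ Submodule.span A (Set.range (ιMulti A p (M := N))),
      ∀ hy : y ∈ ⋀[A]^p N, ∃ a, expMap p g a = ⟨y, hy⟩ := by
    intro y hy
    induction hy using Submodule.span_induction with
    | mem y hy =>
        obtain ⟨v, rfl⟩ := hy
        intro hy
        refine ⟨⟨ιMulti A p (Function.surjInv hsurj ∘ v),
          ιMulti_range A p (Set.mem_range_self _)⟩, ?_⟩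
        apply Subtype.ext
        show ExteriorAlgebra.map g (ιMulti A p (Function.surjInv hsurj ∘ v)) = _
        rw [map_apply_ιMulti]
        congr 1
        funext i
        simp [Function.surjInv_eq hsurj]
    | zero =>
        intro hy
        exact ⟨0, by apply Subtype.ext; simp⟩
    | add y z hy hz ihy ihz =>
        intro hyz
        obtain ⟨ay, hay⟩ := ihy ((ιMulti_span_fixedDegree A p (M := N)) ▸ hy)
        obtain ⟨az, haz⟩ := ihz ((ιMulti_span_fixedDegree A p (M := N)) ▸ hz)
        refine ⟨ay + az, ?_⟩
        apply Subtype.ext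
        rw [map_add]
        rw [Subtype.ext_iff] at hay haz
        simp [hay, haz]
    | smul c y hy ihy =>
        intro hcy
        obtain ⟨ay, hay⟩ := ihy ((ιMulti_span_fixedDegree A p (M := N)) ▸ hy)
        refine ⟨c • ay, ?_⟩
        apply Subtype.ext
        rw [map_smul]
        rw [Subtype.ext_iff] at hay
        simp [hay]
  exact key x hx' hx


lemma alt_eq_det_smul {ι P : Type*} [Fintype ι] [DecidableEq ι]
    [AddCommGroup P] [Module A P] (e : Module.Basis ι A F) (f : F [⋀^ι]→ₗ[A] P) (v : ι → F) :
    f v = e.det v • f e := by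
  have heq : f = AlternatingMap.smulRight e.det (f e) := by
    refine Module.Basis.ext_alternating e fun i hi => ?_
    let σ : Equiv.Perm ι := Equiv.ofBijective i (Finite.injective_iff_bijective.1 hi)
    show f (e ∘ σ) = (AlternatingMap.smulRight e.det (f e)) (e ∘ σ)
    have hs : (AlternatingMap.smulRight e.det (f e)) (e ∘ σ) = e.det (e ∘ σ) • f e := rfl
    rw [hs, AlternatingMap.map_perm, AlternatingMap.map_perm, Module.Basis.det_self]
    simp [Units.smul_def, Int.cast_smul_eq_zsmul]
  conv_lhs => rw [heq]
  rfl

/-- The coordinate of an element of `⋀^s F` with respect to the generator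
`e₁ ∧ ⋯ ∧ eₛ`. -/
noncomputable def coordAlg {s : ℕ} (bF : Module.Basis (Fin s) A F) :
    ExteriorAlgebra A F →ₗ[A] A :=
  liftAlternating (Function.update (fun _ => 0) s bF.det)

lemma map_h_eq {s : ℕ} (bF : Module.Basis (Fin s) A F) (h : F →ₗ[A] M) (b : ⋀[A]^s F) :
    ExteriorAlgebra.map h (b : ExteriorAlgebra A F)
      = coordAlg bF (b : ExteriorAlgebra A F) • ιMulti A s (fun j => h (bF j)) := by
  classical
  have hEq : Set.EqOn ((ExteriorAlgebra.map h).toLinearMap)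
      ((coordAlg bF).smulRight (ιMulti A s (fun j => h (bF j))))
      ((⋀[A]^s F : Submodule A (ExteriorAlgebra A F)) : Set (ExteriorAlgebra A F)) := by
    rw [← ιMulti_span_fixedDegree]
    apply LinearMap.eqOn_span
    rintro _ ⟨v, rfl⟩
    simp only [AlgHom.toLinearMap_apply, map_apply_ιMulti, LinearMap.smulRight_apply,
      coordAlg, liftAlternating_apply_ιMulti, Function.update_self]
    have := alt_eq_det_smul bF ((ιMulti A s (M := M)).compLinearMap h) v
    simpa [AlternatingMap.compLinearMap_apply, Function.comp_def] using this
  exact hEq b.2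

lemma expMap_coe {R : Type*} [CommRing R] {M N : Type*} [AddCommGroup M] [Module R M]
    [AddCommGroup N] [Module R N] (n : ℕ) (f : M →ₗ[R] N) (x : ⋀[R]^n M) :
    (expMap n f x : ExteriorAlgebra R N) = ExteriorAlgebra.map f (x : ExteriorAlgebra R M) :=
  rfl

end StarkAux

theorem stark_systems_stmt0 (A : Type*) [CommRing A] (F M N : Type*)
    [AddCommGroup F] [Module A F] [AddCommGroup M] [Module A M] [AddCommGroup N] [Module A N]
    (s r : ℕ) (hsr : s ≤ r) (bF : Module.Basis (Fin s) A F)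
    (h : F →ₗ[A] M) (g : M →ₗ[A] N)
    (hexact : Function.Exact h g) (hsurj : Function.Surjective g) :
    ∃! φ : (⋀[A]^(r - s) N) ⊗[A] (⋀[A]^s F) →ₗ[A] ⋀[A]^r M,
      ∀ (a : ⋀[A]^(r - s) M) (b : ⋀[A]^s F) (m : ⋀[A]^r M),
        (m : ExteriorAlgebra A M) =
            (a : ExteriorAlgebra A M) * ((expMap s h b : ⋀[A]^s M) : ExteriorAlgebra A M) →
        φ (expMap (r - s) g a ⊗ₜ[A] b) = m := by
  classical
  have hker : ∀ m, g m = 0 → m ∈ LinearMap.range h :=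
    fun m hm => LinearMap.mem_range.mpr ((hexact m).mp hm)
  have hrs : r - s + s = r := Nat.sub_add_cancel hsr
  have hmem : ∀ x : ⋀[A]^(r - s) N,
      StarkAux.auxMap bF h hsurj hker (r - s) x ∈ ⋀[A]^r M := by
    intro x
    obtain ⟨a, rfl⟩ := StarkAux.expMap_surjective hsurj (r - s) x
    rw [StarkAux.auxMap_expMap]
    have := StarkAux.mul_mem_exteriorPower a.2 (ιMulti_range A s (Set.mem_range_self (fun j => h (bF j))))
    rwa [hrs] at this
  set Ψ : ⋀[A]^(r - s) N →ₗ[A] ⋀[A]^r M :=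
    LinearMap.codRestrict (⋀[A]^r M) (StarkAux.auxMap bF h hsurj hker (r - s)) hmem with hΨ
  set φ : (⋀[A]^(r - s) N) ⊗[A] (⋀[A]^s F) →ₗ[A] ⋀[A]^r M :=
    TensorProduct.lift (LinearMap.mk₂ A
      (fun x b => StarkAux.coordAlg bF (b : ExteriorAlgebra A F) • Ψ x)
      (fun x y b => by simp only [map_add, smul_add])
      (fun cA x b => by simp only [map_smul]; rw [smul_comm])
      (fun x b₁ b₂ => by simp only [Submodule.coe_add, map_add, add_smul])
      (fun cA x b => by
        simp only [Submodule.coe_smul, map_smul, smul_eq_mul, mul_smul])) with hφ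
  have hprop : ∀ (a : ⋀[A]^(r - s) M) (b : ⋀[A]^s F) (m : ⋀[A]^r M),
      (m : ExteriorAlgebra A M) =
          (a : ExteriorAlgebra A M) * ((expMap s h b : ⋀[A]^s M) : ExteriorAlgebra A M) →
      φ (expMap (r - s) g a ⊗ₜ[A] b) = m := by
    intro a b m hm
    apply Subtype.ext
    have h1 : φ (expMap (r - s) g a ⊗ₜ[A] b)
        = StarkAux.coordAlg bF (b : ExteriorAlgebra A F) • Ψ (expMap (r - s) g a) := by
      rw [hφ]
      simp [TensorProduct.lift.tmul]
    rw [h1, hm, StarkAux.expMap_coe, StarkAux.map_h_eq bF h b]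
    show StarkAux.coordAlg bF (b : ExteriorAlgebra A F) •
        (StarkAux.auxMap bF h hsurj hker (r - s) (expMap (r - s) g a)) = _
    rw [StarkAux.auxMap_expMap, mul_smul_comm]
  refine ⟨φ, hprop, ?_⟩
  intro φ' hφ'
  refine TensorProduct.ext' fun x b => ?_
  obtain ⟨a, rfl⟩ := StarkAux.expMap_surjective hsurj (r - s) x
  have hmm : (a : ExteriorAlgebra A M)
      * ((expMap s h b : ⋀[A]^s M) : ExteriorAlgebra A M) ∈ ⋀[A]^r M := by
    have := StarkAux.mul_mem_exteriorPower a.2 (expMap s h b).2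
    rwa [hrs] at this
  rw [hφ' a b ⟨_, hmm⟩ rfl, hprop a b ⟨_, hmm⟩ rfl]
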